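/- Let G(V,E,C,f) be a (t+1)-color connected edge-colored graph with V = {v₁,...,v_k,v_{k+1}}, color set C = {c₁,...,c_n}, and let m = max over colors c of the number of edges colored c. Construct the m×n array whose column j contains, for each edge ⟨v_i,v_{i'}⟩ of color c_j, the encoding symbol v_i ⊕ v_{i'}, with occurrences of v_{k+1} replaced by 0 (i.e., v_{k+1} ⊕ v is replaced by v). Then this array is a t-erasure tolerating array BP-XOR code for the k information symbols v₁,...,v_k: for every set of t colors, BP decoding recovers every v_i from the columns of the remaining n-t colors. Moreover, each v_{i₀} is recovered as the XOR telescoping along any path from v_{k+1} to v_{i₀} avoiding the t erased colors. -/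

import Mathlib

/-- Peeling (belief propagation) recoverability of information symbols from cells. -/
inductive Recoverable {ι : Type} (cells : Set (Finset ι)) : ι → Prop where
  | step (s : Finset ι) (hs : s ∈ cells) (i : ι) (hi : i ∈ s)
      (h : ∀ j ∈ s, j ≠ i → Recoverable cells j) : Recoverable cells i

lemma telescope_aux {α : Type*} {l : ℕ} (σ : α → (Fin l → ZMod 2)) :
    ∀ (L : List α) (h : L ≠ []),
      ((L.zip L.tail).map fun q => σ q.1 + σ q.2).sum = σ (L.head h) + σ (L.getLast h) := by
  intro L
  induction L with
  | nil => intro h; exact absurd rfl h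
  | cons x L ih =>
    intro _
    cases L with
    | nil =>
      simp only [List.tail, List.zip_nil_right, List.map_nil, List.sum_nil,
        List.head, List.getLast]
      funext i
      exact ((by decide : ∀ a : ZMod 2, 0 = a + a) _)
    | cons y L' =>
      have hne : (y :: L') ≠ [] := by simp
      have := ih hne
      simp only [List.tail_cons, List.zip_cons_cons, List.map_cons, List.sum_cons] at *
      rw [this]
      simp only [List.getLast_cons hne, List.head_cons]
      funext i
      simp only [Pi.add_apply]
      have h2 : ∀ a : ZMod 2, a + a = 0 := by decide
      have : σ y i + σ y i = 0 := h2 _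
      linear_combination this

lemma recov_aux {k n : ℕ} {ι : Type} (ends : ι → Sym2 (Fin (k + 1))) (col : ι → Fin n)
    (D : Finset (Fin n)) :
    ∀ x : Fin (k + 1),
      Relation.ReflTransGen (fun u v => ∃ e : ι, col e ∉ D ∧ ends e = s(u, v)) (Fin.last k) x →
      ∀ a : Fin k, x = a.castSucc →
        Recoverable {s : Finset (Fin k) | ∃ e : ι, col e ∉ D ∧
          s = Finset.univ.filter fun i : Fin k => i.castSucc ∈ ends e} a := by
  intro x h
  induction h with
  | refl =>
    intro a ha
    exact absurd ha.symm (Fin.castSucc_lt_last a).ne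
  | tail hbc hedge ih =>
    rename_i b c
    intro a ha
    obtain ⟨e, he, hends⟩ := hedge
    refine Recoverable.step (Finset.univ.filter fun i : Fin k => i.castSucc ∈ ends e)
      (Set.mem_setOf.mpr ⟨e, he, rfl⟩) a ?_ ?_
    · simp only [Finset.mem_filter, Finset.mem_univ, true_and, hends, ← ha]
      exact Sym2.mem_mk_right _ _
    · intro j hj hja
      simp only [Finset.mem_filter, Finset.mem_univ, true_and, hends, Sym2.mem_iff] at hj
      rcases hj with hj | hj
      · exact ih j hj.symm
      · exact absurd (Fin.castSucc_injective _ (hj.trans ha)) hja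

theorem stmt11 (k n t l : ℕ) {ι : Type}
    (ends : ι → Sym2 (Fin (k + 1))) (col : ι → Fin n)
    (hloop : ∀ e : ι, ¬ (ends e).IsDiag)
    (hconn : ∀ D : Finset (Fin n), D.card = t →
      ∀ x y : Fin (k + 1),
        Relation.ReflTransGen (fun u v => ∃ e : ι, col e ∉ D ∧ ends e = s(u, v)) x y) :
    ∀ D : Finset (Fin n), D.card = t →
      (∀ a : Fin k,
        Recoverable {s : Finset (Fin k) | ∃ e : ι, col e ∉ D ∧
          s = Finset.univ.filter fun i : Fin k => i.castSucc ∈ ends e} a) ∧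
      (∀ a : Fin k, ∃ L : List (Fin (k + 1)),
        L ≠ [] ∧ L.head? = some (Fin.last k) ∧ L.getLast? = some a.castSucc ∧
        L.Chain' (fun u v => ∃ e : ι, col e ∉ D ∧ ends e = s(u, v)) ∧
        ∀ σ : Fin (k + 1) → (Fin l → ZMod 2), σ (Fin.last k) = 0 →
          σ a.castSucc = ((L.zip L.tail).map fun q => σ q.1 + σ q.2).sum) := by
  intro D hD
  constructor
  · intro a
    exact recov_aux ends col D _ (hconn D hD (Fin.last k) a.castSucc) a rfl
  · intro a
    obtain ⟨L0, hchain, hlast⟩ :=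
      List.exists_isChain_cons_of_relationReflTransGen (hconn D hD (Fin.last k) a.castSucc)
    refine ⟨Fin.last k :: L0, by simp, by simp, ?_, hchain, ?_⟩
    · rw [List.getLast?_eq_getLast (by simp)]
      exact congrArg some hlast
    · intro σ hσ
      rw [telescope_aux σ (Fin.last k :: L0) (by simp), List.head_cons, hσ, zero_add]
      rw [hlast]
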